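/- Let X and Y be Hilbert spaces and T : X → Y a bounded linear operator. Suppose that for every ε > 0 there exist a Banach space Z_ε, a compact linear operator S_ε : X → Z_ε, and a constant C_ε > 0 such that ‖Tx‖_Y ≤ ε‖x‖_X + C_ε‖S_ε x‖_{Z_ε} for all x ∈ X. Then T is compact. -/

import Mathlib

/-- A compact factorization datum: a Banach space `Z` together with a compact
continuous linear operator `S : X → Z`. -/
structure CompactFactor (X : Type*) [NormedAddCommGroup X] [NormedSpace ℂ X] where
  Z : Type
  [instN : NormedAddCommGroup Z]
  [instM : NormedSpace ℂ Z]
  [instC : CompleteSpace Z]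
  S : X →L[ℂ] Z
  compact : IsCompactOperator S

attribute [instance] CompactFactor.instN CompactFactor.instM CompactFactor.instC

theorem stmt0 {X Y : Type*} [NormedAddCommGroup X] [InnerProductSpace ℂ X] [CompleteSpace X]
    [NormedAddCommGroup Y] [InnerProductSpace ℂ Y] [CompleteSpace Y]
    (T : X →L[ℂ] Y)
    (h : ∀ ε : ℝ, 0 < ε → ∃ (F : CompactFactor X) (C : ℝ), 0 < C ∧
      ∀ x : X, ‖T x‖ ≤ ε * ‖x‖ + C * ‖F.S x‖) :
    IsCompactOperator T := by
  have key : IsCompactOperator (T : X →ₗ[ℂ] Y) := by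
    rw [isCompactOperator_iff_isCompact_closure_image_ball (T : X →ₗ[ℂ] Y) one_pos]
    have htb : TotallyBounded ((T : X →ₗ[ℂ] Y) '' Metric.ball 0 1) := by
      rw [totallyBounded_iff_subset]
      intro d hd
      rw [Metric.mem_uniformity_dist] at hd
      obtain ⟨δ, hδ, hdδ⟩ := hd
      obtain ⟨F, C, hC, hineq⟩ := h (δ / 4) (by positivity)
      -- the image of the unit ball under F.S is totally bounded
      have htbS : TotallyBounded (F.S '' Metric.ball 0 1) :=
        ((F.compact.isCompact_closure_image_ball (𝕜₁ := ℂ) 1).totallyBounded).subset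
          subset_closure
      obtain ⟨t, hts, htf, hcov⟩ := totallyBounded_iff_subset.mp htbS
        { p : F.Z × F.Z | dist p.1 p.2 < δ / (4 * C) }
        (Metric.dist_mem_uniformity (by positivity))
      choose! g hg1 hg2 using fun z (hz : z ∈ t) => hts hz
      refine ⟨(fun z => T (g z)) '' t, ?_, htf.image _, ?_⟩
      · rintro _ ⟨z, hz, rfl⟩
        exact ⟨g z, hg1 z hz, rfl⟩
      · rintro _ ⟨x, hx, rfl⟩
        obtain ⟨z, hz, hzx⟩ := Set.mem_iUnion₂.mp (hcov ⟨x, hx, rfl⟩)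
        simp only [Set.mem_setOf_eq] at hzx
        refine Set.mem_iUnion₂.mpr ⟨T (g z), ⟨z, hz, rfl⟩, ?_⟩
        refine Set.mem_setOf_eq ▸ hdδ ?_
        have h1 : ‖x - g z‖ ≤ 2 := by
          have hx1 : ‖x‖ < 1 := by simpa using hx
          have hx2 : ‖g z‖ < 1 := by simpa using hg1 z hz
          calc ‖x - g z‖ ≤ ‖x‖ + ‖g z‖ := norm_sub_le _ _
          _ ≤ 2 := by linarith
        have h2 : ‖F.S (x - g z)‖ < δ / (4 * C) := by
          rw [map_sub, hg2 z hz, ← dist_eq_norm]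
          exact hzx
        have h3 := hineq (x - g z)
        have h4 : ‖T x - T (g z)‖ = ‖T (x - g z)‖ := by rw [map_sub]
        have h5 : C * ‖F.S (x - g z)‖ < C * (δ / (4 * C)) :=
          (mul_lt_mul_iff_right₀ hC).mpr h2
        have h6 : C * (δ / (4 * C)) = δ / 4 := by field_simp
        have h7 : δ / 4 * ‖x - g z‖ ≤ δ / 4 * 2 :=
          mul_le_mul_of_nonneg_left h1 (by positivity)
        have : dist ((T : X →ₗ[ℂ] Y) x) (T (g z)) = ‖T x - T (g z)‖ := by
          simp [dist_eq_norm]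
        rw [this, h4]
        linarith
    exact TotallyBounded.isCompact_of_isClosed htb.closure isClosed_closure
  simpa using key
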